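/- Define a_s(n) by ∑_{n≥0} a_s(n) q^n = Δ^{(9^s-1)/8} as formal power series over the integers, and r_s(j) by ∏_{n≥1}(1-q^{3·9^s n}) = 1 + ∑_{j≥1} r_s(j) q^{3·9^s j}. Then for all n, a_s(n) ≡ p((n - (9^s-1)/8)/3) + ∑_{j≥1} r_s(j) · p((n - (9^s-1)/8)/3 - 9^s j) (mod 3), where p(x) is interpreted as 0 if x is not a nonnegative integer. -/

import Mathlib

open PowerSeries Finset

/-- The partition function `p n`. -/
def partitionFun (n : ℕ) : ℕ := Fintype.card (Nat.Partition n)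

/-- `Δ = q·∏_{n≥1}(1-qⁿ)^{24}` over `ℤ`, defined coefficientwise via stabilized
partial products. -/
noncomputable def Delta : PowerSeries ℤ :=
  PowerSeries.mk fun n =>
    PowerSeries.coeff (R := ℤ) n
      (PowerSeries.X * ∏ k ∈ Finset.range (n + 1), (1 - (PowerSeries.X : PowerSeries ℤ) ^ (k + 1)) ^ 24)

/-- `a_s(n)`: the `n`-th coefficient of `Δ^{(9^s-1)/8}`. -/
noncomputable def aCoeff (s n : ℕ) : ℤ :=
  PowerSeries.coeff (R := ℤ) n (Delta ^ ((9 ^ s - 1) / 8))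

/-- `r_s(j)`: defined by `∏_{n≥1}(1-q^{3·9^s n}) = 1 + ∑_{j≥1} r_s(j) q^{3·9^s j}`,
extracted coefficientwise from the stabilized partial product. -/
noncomputable def rCoeff (s j : ℕ) : ℤ :=
  PowerSeries.coeff (R := ℤ) (3 * 9 ^ s * j)
    (∏ n ∈ Finset.range (j + 1), (1 - (PowerSeries.X : PowerSeries ℤ) ^ (3 * 9 ^ s * (n + 1))))

/-- `p(x)` extended to `ℤ`, vanishing on negative arguments. -/
def pExt (x : ℤ) : ℤ := if 0 ≤ x then (partitionFun x.toNat : ℤ) else 0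

/-- `p(x/3)` when `3 ∣ x`, and `0` if `x/3` is not an integer. -/
def pDiv3 (x : ℤ) : ℤ := if (3 : ℤ) ∣ x then pExt (x / 3) else 0

namespace AuxR

variable {R : Type*} [CommRing R]

theorem dvd_sub_iff_coeff_eq {N : ℕ} {f g : R⟦X⟧} :
    (X : R⟦X⟧) ^ N ∣ f - g ↔ ∀ m < N, coeff (R := R) m f = coeff (R := R) m g := by
  rw [X_pow_dvd_iff]
  constructor
  · intro h m hm
    have := h m hm
    rw [map_sub, sub_eq_zero] at this
    exact this
  · intro h m hm
    rw [map_sub, sub_eq_zero]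
    exact h m hm

theorem dvd_sub_mul {N : ℕ} {f₁ f₂ g₁ g₂ : R⟦X⟧} (h₁ : (X : R⟦X⟧) ^ N ∣ f₁ - f₂)
    (h₂ : (X : R⟦X⟧) ^ N ∣ g₁ - g₂) : (X : R⟦X⟧) ^ N ∣ f₁ * g₁ - f₂ * g₂ := by
  have : f₁ * g₁ - f₂ * g₂ = f₁ * (g₁ - g₂) + (f₁ - f₂) * g₂ := by ring
  rw [this]
  exact dvd_add (Dvd.dvd.mul_left h₂ f₁) (Dvd.dvd.mul_right h₁ g₂)

theorem dvd_sub_pow {N : ℕ} {f₁ f₂ : R⟦X⟧} (h : (X : R⟦X⟧) ^ N ∣ f₁ - f₂) (d : ℕ) :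
    (X : R⟦X⟧) ^ N ∣ f₁ ^ d - f₂ ^ d := by
  induction d with
  | zero => simp
  | succ d ih =>
    rw [pow_succ, pow_succ]
    exact dvd_sub_mul ih h

theorem prod_sub_one_dvd {N : ℕ} {t : Finset ℕ} {a : ℕ → R⟦X⟧}
    (h : ∀ k ∈ t, (X : R⟦X⟧) ^ N ∣ a k - 1) : (X : R⟦X⟧) ^ N ∣ (∏ k ∈ t, a k) - 1 := by
  classical
  induction t using Finset.induction_on with
  | empty => simp
  | @insert x u hx ih =>
    rw [Finset.prod_insert hx]
    have h1 : (X : R⟦X⟧) ^ N ∣ a x * (∏ k ∈ u, a k) - 1 * 1 :=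
      dvd_sub_mul (h x (mem_insert_self x u)) (ih fun k hk => h k (mem_insert_of_mem hk))
    simpa using h1

theorem prod_range_stable {N M M' : ℕ} {a : ℕ → R⟦X⟧} (hM : M' ≤ M)
    (h : ∀ k, M' ≤ k → (X : R⟦X⟧) ^ N ∣ a k - 1) :
    (X : R⟦X⟧) ^ N ∣ (∏ k ∈ range M, a k) - ∏ k ∈ range M', a k := by
  rw [← Finset.prod_range_mul_prod_Ico a hM]
  have : (∏ k ∈ range M', a k) * (∏ k ∈ Ico M' M, a k) - (∏ k ∈ range M', a k)
      = (∏ k ∈ range M', a k) * ((∏ k ∈ Ico M' M, a k) - 1) := by ring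
  rw [this]
  exact Dvd.dvd.mul_left (prod_sub_one_dvd fun k hk => h k (mem_Ico.mp hk).1) _

/-- coefficients supported on multiples of `t` are preserved by products -/
theorem coeff_prod_eq_zero {t : ℕ} {u : Finset ℕ} {a : ℕ → R⟦X⟧}
    (h : ∀ k ∈ u, ∀ m : ℕ, ¬ t ∣ m → coeff (R := R) m (a k) = 0) :
    ∀ m : ℕ, ¬ t ∣ m → coeff (R := R) m (∏ k ∈ u, a k) = 0 := by
  classical
  induction u using Finset.induction_on with
  | empty =>
    intro m hm
    have hm0 : m ≠ 0 := by rintro rfl; exact hm (dvd_zero t)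
    simp [coeff_one, hm0]
  | @insert x u hx ih =>
    intro m hm
    rw [Finset.prod_insert hx, coeff_mul]
    apply Finset.sum_eq_zero
    rintro ⟨i, j⟩ hij
    rw [HasAntidiagonal.mem_antidiagonal] at hij
    by_cases hti : t ∣ i
    · have htj : ¬ t ∣ j := fun htj => hm (hij ▸ dvd_add hti htj)
      rw [ih (fun k hk => h k (mem_insert_of_mem hk)) j htj, mul_zero]
    · rw [h x (mem_insert_self x u) i hti, zero_mul]

end AuxR


namespace Aux3
noncomputable section
variable {α : Type*}
open scoped Classical

/-- A convenience constructor for the power series whose coefficients indicate a subset. -/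
def indicatorSeries (α : Type*) [Semiring α] (s : Set ℕ) : PowerSeries α :=
  PowerSeries.mk fun n => if n ∈ s then 1 else 0

theorem coeff_indicator (s : Set ℕ) [Semiring α] (n : ℕ) :
    coeff (R := α) n (indicatorSeries _ s) = if n ∈ s then 1 else 0 :=
  coeff_mk _ _

theorem constantCoeff_indicator (s : Set ℕ) [Semiring α] :
    constantCoeff (R := α) (indicatorSeries _ s) = if 0 ∈ s then 1 else 0 :=
  rfl

theorem num_series' [Field α] (i : ℕ) :
    (1 - (X : PowerSeries α) ^ (i + 1))⁻¹ = indicatorSeries α {k | i + 1 ∣ k} := by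
  rw [PowerSeries.inv_eq_iff_mul_eq_one]
  · ext n
    cases n with
    | zero => simp [mul_sub, zero_pow, constantCoeff_indicator]
    | succ n =>
      simp only [coeff_one, if_false, mul_sub, mul_one, coeff_indicator,
        LinearMap.map_sub, reduceCtorEq]
      simp_rw [coeff_mul, coeff_X_pow, coeff_indicator, @boole_mul _ _ _ _]
      rw [@sum_ite _ _ _ _ _ (fun _ => Classical.propDecidable _), sum_ite]
      simp_rw [@filter_filter _ _ _ _ _, sum_const_zero, add_zero, sum_const, nsmul_eq_mul, mul_one,
        sub_eq_iff_eq_add, zero_add]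
      symm
      split_ifs with h
      · suffices #{a ∈ antidiagonal (n + 1) | i + 1 ∣ a.fst ∧ a.snd = i + 1} = 1 by
          simp only [Set.mem_setOf_eq]; convert congr_arg ((↑) : ℕ → α) this; norm_cast
        rw [card_eq_one]
        cases' h with p hp
        refine ⟨((i + 1) * (p - 1), i + 1), ?_⟩
        ext ⟨a₁, a₂⟩
        simp only [mem_filter, Prod.mk.injEq, HasAntidiagonal.mem_antidiagonal, mem_singleton]
        constructor
        · rintro ⟨a_left, ⟨a, rfl⟩, rfl⟩
          refine ⟨?_, rfl⟩
          rw [Nat.mul_sub_left_distrib, ← hp, ← a_left, mul_one, Nat.add_sub_cancel]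
        · rintro ⟨rfl, rfl⟩
          match p with
          | 0 => rw [mul_zero] at hp; cases hp
          | p + 1 => rw [hp]; simp [mul_add]
      · suffices #{a ∈ antidiagonal (n + 1) | i + 1 ∣ a.fst ∧ a.snd = i + 1} = 0 by
          simp only [Set.mem_setOf_eq]; convert congr_arg ((↑) : ℕ → α) this; norm_cast
        rw [card_eq_zero]
        apply eq_empty_of_forall_notMem
        simp only [Prod.forall, mem_filter, not_and, HasAntidiagonal.mem_antidiagonal]
        rintro _ h₁ h₂ ⟨a, rfl⟩ rfl
        apply h
        simp [← h₂]
  · simp [zero_pow]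

-- The main workhorse of the partition theorem proof.
theorem partialGF_prop (α : Type*) [CommSemiring α] (n : ℕ) (s : Finset ℕ) (hs : ∀ i ∈ s, 0 < i)
    (c : ℕ → Set ℕ) (hc : ∀ i, i ∉ s → 0 ∈ c i) :
    #{p : n.Partition | (∀ j, p.parts.count j ∈ c j) ∧ ∀ j ∈ p.parts, j ∈ s} =
      coeff (R := α) n (∏ i ∈ s, indicatorSeries α ((· * i) '' c i)) := by
  simp_rw [coeff_prod, coeff_indicator, prod_boole, sum_boole]
  apply congr_arg
  simp only [mem_univ, forall_true_left, not_and, not_forall, exists_prop,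
    Set.mem_image, not_exists]
  set φ : (a : Nat.Partition n) →
    a ∈ filter (fun p ↦ (∀ (j : ℕ), Multiset.count j p.parts ∈ c j) ∧ ∀ j ∈ p.parts, j ∈ s) univ →
    ℕ →₀ ℕ := fun p _ => {
      toFun := fun i => Multiset.count i p.parts • i
      support := Finset.filter (fun i => i ≠ 0) p.parts.toFinset
      mem_support_toFun := fun a => by
        simp only [smul_eq_mul, ne_eq, mul_eq_zero, Multiset.count_eq_zero]
        rw [not_or, not_not]
        simp only [Multiset.mem_toFinset, not_not, mem_filter] }
  refine Finset.card_bij φ ?_ ?_ ?_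
  · intro a ha
    simp only [φ, not_forall, not_exists, not_and, exists_prop, mem_filter]
    rw [mem_finsuppAntidiag]
    dsimp only [ne_eq, smul_eq_mul, id_eq, eq_mpr_eq_cast, le_eq_subset, Finsupp.coe_mk]
    simp only [mem_univ, forall_true_left, not_and, not_forall, exists_prop,
      mem_filter, true_and] at ha
    refine ⟨⟨?_, fun i ↦ ?_⟩, fun i _ ↦ ⟨a.parts.count i, ha.1 i, rfl⟩⟩
    · conv_rhs => simp [← a.parts_sum]
      rw [sum_multiset_count_of_subset _ s]
      · simp only [smul_eq_mul]
      · intro i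
        simp only [Multiset.mem_toFinset, not_not, mem_filter]
        apply ha.2
    · simp only [ne_eq, Multiset.mem_toFinset, not_not, mem_filter, and_imp]
      exact fun hi _ ↦ ha.2 i hi
  · intro p₁ hp₁ p₂ hp₂ h
    apply Nat.Partition.ext
    simp only [true_and, mem_univ, mem_filter] at hp₁ hp₂
    ext i
    simp only [φ, ne_eq, Multiset.mem_toFinset, not_not, smul_eq_mul, Finsupp.mk.injEq] at h
    by_cases hi : i = 0
    · rw [hi]
      rw [Multiset.count_eq_zero_of_notMem]
      · rw [Multiset.count_eq_zero_of_notMem]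
        intro a; exact Nat.lt_irrefl 0 (hs 0 (hp₂.2 0 a))
      intro a; exact Nat.lt_irrefl 0 (hs 0 (hp₁.2 0 a))
    · rw [← mul_left_inj' hi]
      rw [funext_iff] at h
      exact h.2 i
  · simp only [φ, mem_filter, mem_finsuppAntidiag, mem_univ, exists_prop, true_and, and_assoc]
    rintro f ⟨hf, hf₃, hf₄⟩
    have hf' : f ∈ finsuppAntidiag s n := mem_finsuppAntidiag.mpr ⟨hf, hf₃⟩
    simp only [mem_finsuppAntidiag] at hf'
    refine ⟨⟨∑ i ∈ s, Multiset.replicate (f i / i) i, ?_, ?_⟩, ?_, ?_, ?_⟩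
    · intro i hi
      simp only [exists_prop, Multiset.mem_sum, mem_map, Function.Embedding.coeFn_mk] at hi
      rcases hi with ⟨t, ht, z⟩
      apply hs
      rwa [Multiset.eq_of_mem_replicate z]
    · simp_rw [Multiset.sum_sum, Multiset.sum_replicate, Nat.nsmul_eq_mul]
      rw [← hf'.1]
      refine sum_congr rfl fun i hi => Nat.div_mul_cancel ?_
      rcases hf₄ i hi with ⟨w, _, hw₂⟩
      rw [← hw₂]
      exact dvd_mul_left _ _
    · intro i
      simp_rw [Multiset.count_sum', Multiset.count_replicate, sum_ite_eq']
      split_ifs with h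
      · rcases hf₄ i h with ⟨w, hw₁, hw₂⟩
        rwa [← hw₂, Nat.mul_div_cancel _ (hs i h)]
      · exact hc _ h
    · intro i hi
      rw [Multiset.mem_sum] at hi
      rcases hi with ⟨j, hj₁, hj₂⟩
      rwa [Multiset.eq_of_mem_replicate hj₂]
    · ext i
      simp_rw [Multiset.count_sum', Multiset.count_replicate, sum_ite_eq']
      simp only [ne_eq, Multiset.mem_toFinset, not_not, smul_eq_mul, ite_mul,
        zero_mul, Finsupp.coe_mk]
      split_ifs with h
      · apply Nat.div_mul_cancel
        rcases hf₄ i h with ⟨w, _, hw₂⟩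
        apply Dvd.intro_left _ hw₂
      · apply symm
        rw [← Finsupp.notMem_support_iff]
        exact notMem_mono hf'.2 h

end
end Aux3


namespace AuxP
open scoped Classical

theorem card_partition_not_div3 (m : ℕ) (hm : ¬ 3 ∣ m)
    {inst : DecidablePred fun p : m.Partition => ∀ j ∈ p.parts, 3 ∣ j} :
    #(Finset.univ.filter fun p : m.Partition => ∀ j ∈ p.parts, 3 ∣ j) = 0 := by
  rw [Finset.card_eq_zero, Finset.eq_empty_iff_forall_notMem]
  intro p hp
  simp only [Finset.mem_filter, Finset.mem_univ, true_and] at hp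
  exact hm (p.parts_sum ▸ Multiset.dvd_sum fun j hj => hp j hj)

theorem card_partition_div3 (m : ℕ) (hm : 3 ∣ m)
    {inst : DecidablePred fun p : m.Partition => ∀ j ∈ p.parts, 3 ∣ j} :
    #(Finset.univ.filter fun p : m.Partition => ∀ j ∈ p.parts, 3 ∣ j) = partitionFun (m / 3) := by
  rw [partitionFun, ← Finset.card_univ]
  have key : ∀ p : m.Partition, (∀ j ∈ p.parts, 3 ∣ j) →
      Multiset.map (fun j => 3 * j) (Multiset.map (fun j => j / 3) p.parts) = p.parts := by
    intro p hp
    rw [Multiset.map_map]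
    calc Multiset.map ((fun j => 3 * j) ∘ fun j => j / 3) p.parts
        = Multiset.map id p.parts := by
          apply Multiset.map_congr rfl
          intro x hx
          exact Nat.mul_div_cancel' (hp x hx)
      _ = p.parts := Multiset.map_id _
  have sum3 : ∀ t : Multiset ℕ, (Multiset.map (fun j => 3 * j) t).sum = 3 * t.sum := by
    intro t
    simpa using Multiset.sum_map_mul_left (s := t) (a := 3) (f := fun i => i)
  refine Finset.card_bij'
    (fun p hp => ⟨Multiset.map (fun j => j / 3) p.parts, ?_, ?_⟩)
    (fun q _ => ⟨Multiset.map (fun j => 3 * j) q.parts, ?_, ?_⟩) ?_ ?_ ?_ ?_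
  · -- parts pos for forward map
    intro j hj
    simp only [Finset.mem_filter, Finset.mem_univ, true_and] at hp
    obtain ⟨i, hi, rfl⟩ := Multiset.mem_map.mp hj
    exact Nat.div_pos (Nat.le_of_dvd (p.parts_pos hi) (hp i hi)) (by norm_num)
  · -- sum for forward map
    simp only [Finset.mem_filter, Finset.mem_univ, true_and] at hp
    have h := sum3 (Multiset.map (fun j => j / 3) p.parts)
    rw [key p hp, p.parts_sum] at h
    omega
  · -- parts pos for reverse map
    intro j hj
    obtain ⟨i, hi, rfl⟩ := Multiset.mem_map.mp hj
    exact Nat.mul_pos (by norm_num) (q.parts_pos hi)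
  · -- sum for reverse map
    rw [sum3, q.parts_sum, Nat.mul_div_cancel' hm]
  · intro p hp; exact Finset.mem_univ _
  · intro q hq
    simp only [Finset.mem_filter, Finset.mem_univ, true_and]
    intro j hj
    obtain ⟨i, hi, rfl⟩ := Multiset.mem_map.mp hj
    exact dvd_mul_right 3 i
  · intro p hp
    apply Nat.Partition.ext
    simp only [Finset.mem_filter, Finset.mem_univ, true_and] at hp
    exact key p hp
  · intro q hq
    apply Nat.Partition.ext
    simp only [Multiset.map_map]
    calc Multiset.map ((fun j => j / 3) ∘ fun j => 3 * j) q.parts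
        = Multiset.map id q.parts := by
          apply Multiset.map_congr rfl
          intro x hx
          simp [Nat.mul_div_cancel_left]
      _ = q.parts := Multiset.map_id _

end AuxP

namespace AuxF
abbrev K := ZMod 3

theorem three_eq_zero : (3 : K⟦X⟧) = 0 := by
  rw [show (3 : K⟦X⟧) = C (R := K) 3 from (map_ofNat _ 3).symm]
  rw [show (3 : K) = 0 from rfl, map_zero]

theorem cube (y : K⟦X⟧) : (1 - y) ^ 3 = 1 - y ^ 3 := by
  linear_combination (y ^ 2 - y) * three_eq_zero

theorem pow_three_pow (y : K⟦X⟧) (e : ℕ) : (1 - y) ^ 3 ^ e = 1 - y ^ 3 ^ e := by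
  induction e with
  | zero => simp
  | succ e ih => rw [pow_succ, pow_mul, ih, cube, ← pow_mul, ← pow_succ]

theorem pow_nine_pow (y : K⟦X⟧) (s : ℕ) : (1 - y) ^ 9 ^ s = 1 - y ^ 9 ^ s := by
  have h9 : (9 : ℕ) ^ s = 3 ^ (2 * s) := by rw [pow_mul]; norm_num
  rw [h9, pow_three_pow]

end AuxF


namespace AuxC
abbrev K := ZMod 3
open scoped Classical

theorem coeff_P (n m : ℕ) (hm : m ≤ n) :
    coeff (R := K) m (∏ k ∈ range (n + 1), (1 - (X : K⟦X⟧) ^ (3 * (k + 1)))⁻¹) =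
      if 3 ∣ m then (partitionFun (m / 3) : K) else 0 := by
  have emb : Function.Injective (fun k : ℕ => 3 * (k + 1)) := by
    intro a b h; simpa using h
  set S : Finset ℕ := (range (n + 1)).map ⟨fun k => 3 * (k + 1), emb⟩ with hS
  have h1 : (∏ k ∈ range (n + 1), (1 - (X : K⟦X⟧) ^ (3 * (k + 1)))⁻¹)
      = ∏ i ∈ S, Aux3.indicatorSeries K ((· * i) '' Set.univ) := by
    rw [hS, Finset.prod_map]
    apply Finset.prod_congr rfl
    intro k _
    have e1 : 3 * (k + 1) = (3 * k + 2) + 1 := by ring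
    have e2 : ((· * (3 * (k + 1))) '' Set.univ : Set ℕ) = {j | (3 * k + 2) + 1 ∣ j} := by
      ext j
      simp only [Set.image_univ, Set.mem_range, Set.mem_setOf_eq, ← e1]
      constructor
      · rintro ⟨c, rfl⟩; exact Dvd.intro_left c rfl
      · rintro ⟨c, rfl⟩; exact ⟨c, mul_comm _ _⟩
    simp only [Function.Embedding.coeFn_mk]
    rw [e2, ← Aux3.num_series', ← e1]
  rw [h1, ← Aux3.partialGF_prop K m S
    (by rintro i hi; simp only [hS, mem_map, Function.Embedding.coeFn_mk] at hi
        obtain ⟨k, _, rfl⟩ := hi; positivity)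
    (fun _ => Set.univ) (fun _ _ => trivial)]
  have hset : ∀ p : m.Partition,
      ((∀ j, p.parts.count j ∈ (Set.univ : Set ℕ)) ∧ ∀ j ∈ p.parts, j ∈ S) ↔
        (∀ j ∈ p.parts, 3 ∣ j) := by
    intro p
    constructor
    · rintro ⟨-, h⟩ j hj
      obtain ⟨k, -, rfl⟩ := by simpa only [hS, mem_map, Function.Embedding.coeFn_mk] using h j hj
      exact Dvd.intro _ rfl
    · intro h
      refine ⟨fun _ => trivial, fun j hj => ?_⟩
      have hjle : j ≤ m := by
        have := Multiset.single_le_sum (fun _ _ => Nat.zero_le _) _ hj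
        rwa [p.parts_sum] at this
      have hjpos : 0 < j := p.parts_pos hj
      obtain ⟨a, rfl⟩ := h j hj
      have ha : 0 < a := by omega
      simp only [hS, mem_map, Function.Embedding.coeFn_mk, mem_range]
      exact ⟨a - 1, by omega, by omega⟩
  have hcard : #{p : m.Partition | (∀ j, p.parts.count j ∈ (Set.univ : Set ℕ)) ∧
        ∀ j ∈ p.parts, j ∈ S}
      = #(Finset.univ.filter fun p : m.Partition => ∀ j ∈ p.parts, 3 ∣ j) := by
    congr 1
    ext p
    simp only [Finset.mem_filter, Finset.mem_univ, true_and]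
    exact hset p
  rw [hcard]
  split_ifs with h3
  · rw [AuxP.card_partition_div3 m h3]
  · rw [AuxP.card_partition_not_div3 m h3]; simp

-- C-product lemmas over ℤ
theorem coeff_prodC_eq_zero (t M m : ℕ) (hm : ¬ t ∣ m) :
    coeff (R := ℤ) m (∏ k ∈ range M, (1 - (X : ℤ⟦X⟧) ^ (t * (k + 1)))) = 0 := by
  refine AuxR.coeff_prod_eq_zero (fun k _ m' hm' => ?_) m hm
  have h0 : m' ≠ 0 := by rintro rfl; exact hm' (dvd_zero t)
  have h1 : m' ≠ t * (k + 1) := by rintro rfl; exact hm' (Dvd.intro _ rfl)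
  simp [coeff_one, coeff_X_pow, h0, h1]

theorem coeff_prodC_mul (s n j : ℕ) (hj : j ≤ n) :
    coeff (R := ℤ) (3 * 9 ^ s * j) (∏ k ∈ range (n + 1), (1 - (X : ℤ⟦X⟧) ^ (3 * 9 ^ s * (k + 1)))) =
      rCoeff s j := by
  set t := 3 * 9 ^ s with ht
  have htpos : 0 < t := by positivity
  have key : (X : ℤ⟦X⟧) ^ (t * j + 1) ∣
      (∏ k ∈ range (n + 1), (1 - (X : ℤ⟦X⟧) ^ (t * (k + 1)))) -
      ∏ k ∈ range (j + 1), (1 - (X : ℤ⟦X⟧) ^ (t * (k + 1))) := by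
    apply AuxR.prod_range_stable (by omega)
    intro k hk
    have : (1 - (X : ℤ⟦X⟧) ^ (t * (k + 1))) - 1 = -(X ^ (t * (k + 1))) := by ring
    rw [this, dvd_neg]
    exact pow_dvd_pow _ (by nlinarith)
  rw [rCoeff, ← ht]
  exact AuxR.dvd_sub_iff_coeff_eq.mp key _ (by omega)

end AuxC


namespace AuxM
open AuxR AuxF AuxC
abbrev K := ZMod 3

theorem eight_dvd (s : ℕ) : 8 * ((9 ^ s - 1) / 8) = 9 ^ s - 1 := by
  apply Nat.mul_div_cancel'
  induction s with
  | zero => simp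
  | succ s ih =>
    obtain ⟨c, hc⟩ := ih
    have h1 : (1 : ℕ) ≤ 9 ^ s := Nat.one_le_pow _ _ (by norm_num)
    exact ⟨9 * c + 1, by rw [pow_succ]; omega⟩

theorem pDiv3_neg {x : ℤ} (hx : x < 0) : pDiv3 x = 0 := by
  rw [pDiv3]
  split_ifs with h
  · rw [pExt, if_neg]
    exact not_le.mpr (Int.ediv_neg_of_neg_of_pos hx (by norm_num))
  · rfl

theorem pDiv3_natCast (m : ℕ) :
    pDiv3 (m : ℤ) = if 3 ∣ m then (partitionFun (m / 3) : ℤ) else 0 := by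
  by_cases h : 3 ∣ m
  · have h1 : (m : ℤ) / 3 = ((m / 3 : ℕ) : ℤ) := (Int.natCast_div m 3).symm
    rw [pDiv3, if_pos (by exact_mod_cast h), pExt, h1,
      if_pos (by positivity), Int.toNat_natCast, if_pos h]
  · rw [pDiv3, if_neg (by exact_mod_cast h), if_neg h]

theorem rCoeff_zero (s : ℕ) : rCoeff s 0 = 1 := by
  rw [rCoeff, mul_zero, Finset.prod_range_one, coeff_zero_eq_constantCoeff]
  simp [zero_pow, Nat.mul_ne_zero]

theorem delta_congr (n : ℕ) :
    (X : ℤ⟦X⟧) ^ (n + 1) ∣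
      Delta - X * ∏ k ∈ range (n + 1), (1 - (X : ℤ⟦X⟧) ^ (k + 1)) ^ 24 := by
  rw [AuxR.dvd_sub_iff_coeff_eq]
  intro m hm
  have h1 : coeff (R := ℤ) m Delta
      = coeff (R := ℤ) m (X * ∏ k ∈ range (m + 1), (1 - (X : ℤ⟦X⟧) ^ (k + 1)) ^ 24) :=
    coeff_mk _ _
  rw [h1]
  have h2 : (X : ℤ⟦X⟧) ^ (m + 1) ∣
      (∏ k ∈ range (n + 1), (1 - (X : ℤ⟦X⟧) ^ (k + 1)) ^ 24) -
        ∏ k ∈ range (m + 1), (1 - (X : ℤ⟦X⟧) ^ (k + 1)) ^ 24 := by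
    apply AuxR.prod_range_stable (by omega)
    intro k hk
    have hdvd : ((1 - (X : ℤ⟦X⟧) ^ (k + 1)) - 1) ∣ ((1 - (X : ℤ⟦X⟧) ^ (k + 1)) ^ 24 - 1 ^ 24) :=
      sub_dvd_pow_sub_pow _ _ 24
    have he : (1 - (X : ℤ⟦X⟧) ^ (k + 1)) - 1 = -(X ^ (k + 1)) := by ring
    rw [he, one_pow] at hdvd
    exact dvd_trans (dvd_trans (pow_dvd_pow _ (by omega)) (dvd_neg.mpr dvd_rfl)) hdvd
  have h3 : (X : ℤ⟦X⟧) ^ (m + 2) ∣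
      X * (∏ k ∈ range (n + 1), (1 - (X : ℤ⟦X⟧) ^ (k + 1)) ^ 24) -
        X * ∏ k ∈ range (m + 1), (1 - (X : ℤ⟦X⟧) ^ (k + 1)) ^ 24 := by
    rw [← mul_sub, pow_succ, mul_comm (X ^ (m+1)) X]
    exact mul_dvd_mul_left X h2
  exact (AuxR.dvd_sub_iff_coeff_eq.mp h3 m (by omega)).symm

theorem main (s : ℕ) (n : ℕ) :
    ((aCoeff s n : ℤ) : K) =
      ((pDiv3 ((n : ℤ) - ((9 ^ s - 1) / 8 : ℕ)) +
        ∑ j ∈ Finset.Icc 1 n,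
          rCoeff s j * pDiv3 ((n : ℤ) - ((9 ^ s - 1) / 8 : ℕ) - 3 * 9 ^ s * j) : ℤ) : K) := by
  classical
  set d := (9 ^ s - 1) / 8 with hd
  set t := 3 * 9 ^ s with ht
  have htpos : 0 < t := by positivity
  have h8 : 8 * d = 9 ^ s - 1 := eight_dvd s
  have h9pos : 1 ≤ 9 ^ s := Nat.one_le_pow _ _ (by norm_num)
  set MD : K⟦X⟧ := PowerSeries.map (Int.castRingHom K) Delta with hMD
  set A : K⟦X⟧ := ∏ k ∈ range (n + 1), (1 - (X : K⟦X⟧) ^ (k + 1)) ^ 24 with hA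
  set P : K⟦X⟧ := ∏ k ∈ range (n + 1), (1 - (X : K⟦X⟧) ^ (3 * (k + 1)))⁻¹ with hP
  set Cser : K⟦X⟧ := ∏ k ∈ range (n + 1), (1 - (X : K⟦X⟧) ^ (t * (k + 1))) with hC
  set Ssum : K⟦X⟧ := ∑ j ∈ range (n + 1), C (R := K) ((rCoeff s j : ℤ) : K) * X ^ (t * j) with hS
  -- step 1: the LHS as a coefficient
  have h1 : ((aCoeff s n : ℤ) : K) = coeff (R := K) n (MD ^ d) := by
    rw [hMD, ← map_pow, coeff_map, aCoeff, ← hd]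
    rfl
  -- step 2: Delta congruence over K
  have h2 : (X : K⟦X⟧) ^ (n + 1) ∣ MD - X * A := by
    have hk := _root_.map_dvd (PowerSeries.map (Int.castRingHom K)) (delta_congr n)
    simpa only [map_sub, map_mul, map_pow, map_one, PowerSeries.map_X, map_prod] using hk
  -- step 3: power congruence
  have h3 : (X : K⟦X⟧) ^ (n + 1) ∣ MD ^ d - (X * A) ^ d := AuxR.dvd_sub_pow h2 d
  -- step 4: exact identity (X*A)^d = X^d * (P * Cser)
  have h4 : (X * A) ^ d = X ^ d * (P * Cser) := by
    have hfac : ∀ k ∈ range (n + 1), ((1 - (X : K⟦X⟧) ^ (k + 1)) ^ 24) ^ d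
        = (1 - (X : K⟦X⟧) ^ (3 * (k + 1)))⁻¹ * (1 - (X : K⟦X⟧) ^ (t * (k + 1))) := by
      intro k _
      have e1 : ((1 - (X : K⟦X⟧) ^ (k + 1)) ^ 24) ^ d
          = ((1 - (X : K⟦X⟧) ^ (k + 1)) ^ 3) ^ (8 * d) := by
        rw [← pow_mul, ← pow_mul]
        congr 1
        ring
      rw [e1, h8, AuxF.cube]
      have e2 : ((X : K⟦X⟧) ^ (k + 1)) ^ 3 = X ^ (3 * (k + 1)) := by
        rw [← pow_mul]
        congr 1
        ring
      rw [e2]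
      have hconst : constantCoeff (R := K) (1 - (X : K⟦X⟧) ^ (3 * (k + 1))) ≠ 0 := by
        simp [zero_pow, Nat.mul_ne_zero]
      have hmul : (1 - (X : K⟦X⟧) ^ (3 * (k + 1)))⁻¹ * (1 - (X : K⟦X⟧) ^ (3 * (k + 1))) = 1 := by
        rw [mul_comm]
        exact PowerSeries.mul_inv_cancel _ hconst
      have e3 : (1 - (X : K⟦X⟧) ^ (3 * (k + 1))) ^ (9 ^ s - 1)
          = (1 - (X : K⟦X⟧) ^ (3 * (k + 1)))⁻¹ *
            ((1 - (X : K⟦X⟧) ^ (3 * (k + 1))) * (1 - (X : K⟦X⟧) ^ (3 * (k + 1))) ^ (9 ^ s - 1)) := by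
        rw [← mul_assoc, hmul, one_mul]
      rw [e3, ← pow_succ']
      have e4 : 9 ^ s - 1 + 1 = 9 ^ s := by omega
      rw [e4, AuxF.pow_nine_pow]
      congr 2
      rw [← pow_mul]
      congr 1
      rw [ht]
      ring
    rw [mul_pow, hA, ← Finset.prod_pow, Finset.prod_congr rfl hfac, Finset.prod_mul_distrib,
      ← hP, ← hC]
  -- step 5: Cser is congruent to Ssum
  have hCmap : Cser = PowerSeries.map (Int.castRingHom K)
      (∏ k ∈ range (n + 1), (1 - (X : ℤ⟦X⟧) ^ (t * (k + 1)))) := by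
    simp only [map_prod, map_sub, map_pow, map_one, PowerSeries.map_X, hC]
  have h5 : (X : K⟦X⟧) ^ (n + 1) ∣ Cser - Ssum := by
    rw [AuxR.dvd_sub_iff_coeff_eq]
    intro m hm
    have hcoeffC : coeff (R := K) m Cser
        = ((coeff (R := ℤ) m (∏ k ∈ range (n + 1), (1 - (X : ℤ⟦X⟧) ^ (t * (k + 1)))) : ℤ) : K) := by
      rw [hCmap, coeff_map]
      rfl
    by_cases hdvd : t ∣ m
    · obtain ⟨j₀, rfl⟩ := hdvd
      have hj₀ : j₀ ≤ n := by nlinarith [htpos]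
      rw [hcoeffC, ht, AuxC.coeff_prodC_mul s n j₀ hj₀, hS, map_sum, Finset.sum_eq_single j₀]
      · rw [coeff_C_mul, coeff_X_pow, if_pos (by rw [ht]), mul_one]
      · intro j hj hne
        rw [coeff_C_mul, coeff_X_pow, if_neg, mul_zero]
        intro hteq
        exact hne (Nat.eq_of_mul_eq_mul_left htpos hteq).symm
      · intro habs
        exact absurd (mem_range.mpr (by omega)) habs
    · rw [hcoeffC, AuxC.coeff_prodC_eq_zero t (n + 1) m hdvd, Int.cast_zero, hS, map_sum]
      symm
      apply Finset.sum_eq_zero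
      intro j hj
      rw [coeff_C_mul, coeff_X_pow, if_neg, mul_zero]
      intro hteq
      exact hdvd ⟨j, hteq⟩
  -- step 6
  have h6 : coeff (R := K) n (X ^ d * (P * Cser)) = coeff (R := K) n (X ^ d * (P * Ssum)) := by
    have hdvd6 : (X : K⟦X⟧) ^ (n + 1) ∣ X ^ d * (P * Cser) - X ^ d * (P * Ssum) := by
      have heq : X ^ d * (P * Cser) - X ^ d * (P * Ssum) = (X ^ d * P) * (Cser - Ssum) := by ring
      rw [heq]
      exact Dvd.dvd.mul_left h5 _
    exact AuxR.dvd_sub_iff_coeff_eq.mp hdvd6 n (by omega)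
  -- step 7: expand coefficient of the sum
  have h7 : X ^ d * (P * Ssum)
      = ∑ j ∈ range (n + 1), C (R := K) ((rCoeff s j : ℤ) : K) * (P * X ^ (d + t * j)) := by
    rw [hS, Finset.mul_sum, Finset.mul_sum]
    apply Finset.sum_congr rfl
    intro j _
    rw [pow_add]
    ring
  have h8' : coeff (R := K) n (X ^ d * (P * Ssum))
      = ∑ j ∈ range (n + 1), ((rCoeff s j : ℤ) : K) *
          (if d + t * j ≤ n then coeff (R := K) (n - (d + t * j)) P else 0) := by
    rw [h7, map_sum]
    apply Finset.sum_congr rfl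
    intro j _
    rw [coeff_C_mul, coeff_mul_X_pow']
  -- step 8: term evaluation
  have hterm : ∀ j : ℕ, (if d + t * j ≤ n then coeff (R := K) (n - (d + t * j)) P else 0)
      = ((pDiv3 ((n : ℤ) - (d : ℤ) - (t : ℤ) * (j : ℤ)) : ℤ) : K) := by
    intro j
    have hcast : (t : ℤ) * (j : ℤ) = ((t * j : ℕ) : ℤ) := by push_cast; ring
    by_cases hle : d + t * j ≤ n
    · rw [if_pos hle]
      set m := n - (d + t * j) with hmdef
      have hxm : (n : ℤ) - (d : ℤ) - (t : ℤ) * (j : ℤ) = (m : ℤ) := by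
        rw [hcast, hmdef]
        push_cast [Nat.cast_sub hle]
        ring
      rw [hxm, hP, AuxC.coeff_P n m (by omega), pDiv3_natCast]
      split_ifs with h3'
      · push_cast
        rfl
      · simp
    · rw [if_neg hle]
      have hx : (n : ℤ) - (d : ℤ) - (t : ℤ) * (j : ℤ) < 0 := by
        rw [hcast]
        have := hle
        omega
      rw [pDiv3_neg hx, Int.cast_zero]
  -- assemble
  have hgoal : ((aCoeff s n : ℤ) : K)
      = ∑ j ∈ range (n + 1), ((rCoeff s j : ℤ) : K) *
          ((pDiv3 ((n : ℤ) - (d : ℤ) - (t : ℤ) * (j : ℤ)) : ℤ) : K) := by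
    rw [h1, AuxR.dvd_sub_iff_coeff_eq.mp h3 n (by omega), h4, h6, h8']
    exact Finset.sum_congr rfl fun j _ => by rw [hterm j]
  have htz : ((3 : ℤ) * 9 ^ s) = (t : ℤ) := by rw [ht]; push_cast; ring
  rw [hgoal, range_eq_Ico, Finset.sum_eq_sum_Ico_succ_bot (by omega), Finset.Ico_add_one_right_eq_Icc,
    rCoeff_zero]
  push_cast
  simp only [htz]
  congr 1
  simp

end AuxM


/-- The recursion `a_s(n) ≡ p((n-(9^s-1)/8)/3) + ∑_{j≥1} r_s(j)·p((n-(9^s-1)/8)/3 - 9^s j)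
(mod 3)`, where `p` is interpreted as `0` at arguments that are not nonnegative integers.
(The sum is finite; it is truncated at `j = n`, beyond which all terms vanish.) -/
theorem aCoeff_recursion (s : ℕ) (hs : 0 < s) (n : ℕ) :
    aCoeff s n ≡
      pDiv3 ((n : ℤ) - ((9 ^ s - 1) / 8 : ℕ)) +
        ∑ j ∈ Finset.Icc 1 n,
          rCoeff s j * pDiv3 ((n : ℤ) - ((9 ^ s - 1) / 8 : ℕ) - 3 * 9 ^ s * j) [ZMOD 3] := by
  exact (ZMod.intCast_eq_intCast_iff' _ _ _).mp (AuxM.main s n)
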